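/- arXiv:1004.1916 — 3 statements merged into one kernel-verified Lean document; each statement's English description precedes it below -/
import Mathlib

section
/- Let T be a uniformly bounded C₀-semigroup on a Banach space X with ‖T_t‖ ≥ 1 for all t ≥ 0, and let h : ℝ≥0 → ℝ≥0 be a non-decreasing function with h(s) > 0 for s > 0. Then there exists x ∈ X such that ∫₀^∞ h(‖T_t x‖) dt = ∞. -/
open Filter MeasureTheory
open scoped NNReal ENNReal

noncomputable def hLsc (h : ℝ≥0 → ℝ≥0) (s : ℝ≥0) : ℝ≥0 := sSup (h '' Set.Iio s)

lemma hLsc_bdd (h : ℝ≥0 → ℝ≥0) (hmono : Monotone h) (s : ℝ≥0) :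
    BddAbove (h '' Set.Iio s) :=
  ⟨h s, by rintro y ⟨u, hu, rfl⟩; exact hmono hu.le⟩

lemma hLsc_mono (h : ℝ≥0 → ℝ≥0) (hmono : Monotone h) : Monotone (hLsc h) := by
  intro s t hst
  exact csSup_le_csSup' (hLsc_bdd h hmono t) (Set.image_mono (Set.Iio_subset_Iio hst))

lemma hLsc_le (h : ℝ≥0 → ℝ≥0) (hmono : Monotone h) (s : ℝ≥0) : hLsc h s ≤ h s :=
  csSup_le' (by rintro y ⟨u, hu, rfl⟩; exact hmono hu.le)

lemma hLsc_pos (h : ℝ≥0 → ℝ≥0) (hmono : Monotone h) (hpos : ∀ s : ℝ≥0, 0 < s → 0 < h s)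
    {s : ℝ≥0} (hs : 0 < s) : 0 < hLsc h s := by
  have h1 : h (s / 2) ≤ hLsc h s :=
    le_csSup (hLsc_bdd h hmono s) ⟨s / 2, NNReal.half_lt_self hs.ne', rfl⟩
  exact lt_of_lt_of_le (hpos _ (by positivity)) h1

lemma hLsc_le_liminf (h : ℝ≥0 → ℝ≥0) (hmono : Monotone h) {a : ℕ → ℝ≥0} {l : ℝ≥0}
    (hconv : Tendsto a atTop (nhds l)) :
    (hLsc h l : ℝ≥0∞) ≤ Filter.liminf (fun k => (hLsc h (a k) : ℝ≥0∞)) atTop := by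
  rw [le_liminf_iff]
  intro b hb
  have hbtop : b ≠ ∞ := hb.ne_top
  have hb' : b.toNNReal < hLsc h l := by
    rw [← ENNReal.coe_lt_coe, ENNReal.coe_toNNReal hbtop]; exact hb
  have hne : (h '' Set.Iio l).Nonempty := by
    by_contra hne
    rw [Set.not_nonempty_iff_eq_empty] at hne
    simp only [hLsc, hne, csSup_empty] at hb'
    exact absurd hb' (by simp)
  obtain ⟨y, ⟨u, hul, rfl⟩, hy⟩ := exists_lt_of_lt_csSup hne hb'
  filter_upwards [hconv.eventually (eventually_gt_nhds hul)] with k hk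
  have hle : h u ≤ hLsc h (a k) := le_csSup (hLsc_bdd h hmono _) ⟨u, hk, rfl⟩
  calc b = (b.toNNReal : ℝ≥0∞) := (ENNReal.coe_toNNReal hbtop).symm
    _ < (h u : ℝ≥0∞) := by exact_mod_cast hy
    _ ≤ _ := by exact_mod_cast hle

lemma aemeas_aux {X : Type*} [NormedAddCommGroup X] [NormedSpace ℂ X]
    (T : ℝ → X →L[ℂ] X) (hTcont : ∀ x : X, ContinuousOn (fun t => T t x) (Set.Ici 0))
    (g : ℝ≥0 → ℝ≥0) (hg : Monotone g) (x : X) :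
    AEMeasurable (fun t => (g ‖T t x‖₊ : ℝ≥0∞)) (volume.restrict (Set.Ioi (0:ℝ))) := by
  have h1 : ContinuousOn (fun t => ‖T t x‖₊) (Set.Ioi 0) :=
    ((hTcont x).mono Set.Ioi_subset_Ici_self).nnnorm
  have h2 : AEMeasurable (fun t => ‖T t x‖₊) (volume.restrict (Set.Ioi (0:ℝ))) :=
    h1.aemeasurable measurableSet_Ioi
  exact (measurable_coe_nnreal_ennreal.comp hg.measurable).comp_aemeasurable h2


/-- a uniformly bounded C₀-semigroup with `‖T_t‖ ≥ 1` for all `t ≥ 0`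
admits, for every non-decreasing `h : ℝ≥0 → ℝ≥0` positive on positives, a vector `x`
with `∫₀^∞ h(‖T_t x‖) dt = ∞`. -/
theorem stmt_2 {X : Type*} [NormedAddCommGroup X] [NormedSpace ℂ X] [CompleteSpace X]
    (T : ℝ → X →L[ℂ] X)
    (hT0 : T 0 = 1)
    (hTadd : ∀ s t : ℝ, 0 ≤ s → 0 ≤ t → T (s + t) = (T s).comp (T t))
    (hTcont : ∀ x : X, ContinuousOn (fun t => T t x) (Set.Ici 0))
    (C : ℝ) (hC : ∀ t : ℝ, 0 ≤ t → ‖T t‖ ≤ C)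
    (hT1 : ∀ t : ℝ, 0 ≤ t → 1 ≤ ‖T t‖)
    (h : ℝ≥0 → ℝ≥0) (hmono : Monotone h) (hpos : ∀ s : ℝ≥0, 0 < s → 0 < h s) :
    ∃ x : X, ∫⁻ t in Set.Ioi (0:ℝ), (h ‖T t x‖₊ : ℝ≥0∞) = ∞ := by
  by_contra hcon
  push_neg at hcon
  set h' : ℝ≥0 → ℝ≥0 := hLsc h with hh'
  have h'mono : Monotone h' := hLsc_mono h hmono
  have hC1 : (1:ℝ) ≤ C := le_trans (hT1 0 le_rfl) (hC 0 le_rfl)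
  set Cn : ℝ≥0 := ⟨C, by linarith⟩ with hCn
  have hCnC : (Cn : ℝ) = C := rfl
  have hCn1 : (1:ℝ≥0) ≤ Cn := by rw [← NNReal.coe_le_coe, hCnC]; exact_mod_cast hC1
  -- the closed sets
  set F : ℕ → Set X := fun n => {x | ∫⁻ t in Set.Ioi (0:ℝ), (h' ‖T t x‖₊ : ℝ≥0∞) ≤ n} with hF
  have hFclosed : ∀ n, IsClosed (F n) := by
    intro n
    apply IsSeqClosed.isClosed
    intro xs x hxs hx
    show ∫⁻ t in Set.Ioi (0:ℝ), (h' ‖T t x‖₊ : ℝ≥0∞) ≤ n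
    have key : ∀ t : ℝ, (h' ‖T t x‖₊ : ℝ≥0∞)
        ≤ liminf (fun k => (h' ‖T t (xs k)‖₊ : ℝ≥0∞)) atTop := by
      intro t
      apply hLsc_le_liminf h hmono
      have h1 : Tendsto (fun k => T t (xs k)) atTop (nhds (T t x)) :=
        ((T t).continuous.tendsto x).comp hx
      exact (continuous_nnnorm.tendsto _).comp h1
    calc ∫⁻ t in Set.Ioi (0:ℝ), (h' ‖T t x‖₊ : ℝ≥0∞)
        ≤ ∫⁻ t in Set.Ioi (0:ℝ), liminf (fun k => (h' ‖T t (xs k)‖₊ : ℝ≥0∞)) atTop :=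
          lintegral_mono fun t => key t
      _ ≤ liminf (fun k => ∫⁻ t in Set.Ioi (0:ℝ), (h' ‖T t (xs k)‖₊ : ℝ≥0∞)) atTop :=
          lintegral_liminf_le' (fun k => aemeas_aux T hTcont h' h'mono (xs k))
      _ ≤ (n : ℝ≥0∞) := by
          refine le_trans (liminf_le_liminf (Eventually.of_forall fun k => hxs k)) ?_
          simp [liminf_const]
  have hFcover : ⋃ n, F n = Set.univ := by
    ext x
    simp only [Set.mem_iUnion, Set.mem_univ, iff_true]
    have hfin : ∫⁻ t in Set.Ioi (0:ℝ), (h' ‖T t x‖₊ : ℝ≥0∞) ≠ ∞ := by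
      refine ne_top_of_le_ne_top (hcon x) (lintegral_mono fun t => ?_)
      exact ENNReal.coe_le_coe.2 (hLsc_le h hmono _)
    obtain ⟨n, hn⟩ := ENNReal.exists_nat_gt hfin
    exact ⟨n, hn.le⟩
  obtain ⟨N, x₀, hx₀⟩ := nonempty_interior_of_iUnion_of_closed hFclosed hFcover
  obtain ⟨r, hr, hball⟩ := Metric.isOpen_iff.1 isOpen_interior x₀ hx₀
  have hball' : Metric.ball x₀ r ⊆ F N := hball.trans interior_subset
  have hx₀F : x₀ ∈ F N := hball' (Metric.mem_ball_self hr)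
  -- uniform bound
  have hUnif : ∀ z : X, ‖z‖ < r →
      ∫⁻ t in Set.Ioi (0:ℝ), (h' (‖T t z‖₊ / 2) : ℝ≥0∞) ≤ (N:ℝ≥0∞) + N := by
    intro z hz
    have hyF : x₀ + z ∈ F N := hball' (by simpa [dist_eq_norm] using hz)
    have hpt : ∀ t : ℝ, (h' (‖T t z‖₊ / 2) : ℝ≥0∞)
        ≤ (h' ‖T t (x₀ + z)‖₊ : ℝ≥0∞) + (h' ‖T t x₀‖₊ : ℝ≥0∞) := by
      intro t
      set a := ‖T t (x₀ + z)‖₊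
      set b := ‖T t x₀‖₊
      have h1 : ‖T t z‖₊ ≤ a + b := by
        have he : T t z = T t (x₀ + z) - T t x₀ := by rw [map_add]; abel
        rw [he]; exact nnnorm_sub_le _ _
      have h2 : ‖T t z‖₊ / 2 ≤ a ⊔ b := by
        rw [div_le_iff₀ (by norm_num)]
        calc ‖T t z‖₊ ≤ a + b := h1
          _ ≤ (a ⊔ b) + (a ⊔ b) := add_le_add le_sup_left le_sup_right
          _ = (a ⊔ b) * 2 := by ring
      have h3 : h' (‖T t z‖₊ / 2) ≤ h' a ⊔ h' b := by
        rw [← h'mono.map_max]; exact h'mono h2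
      calc (h' (‖T t z‖₊ / 2) : ℝ≥0∞) ≤ ((h' a ⊔ h' b : ℝ≥0) : ℝ≥0∞) := by exact_mod_cast h3
        _ ≤ (h' a : ℝ≥0∞) + (h' b : ℝ≥0∞) := by
            rcases max_cases (h' a) (h' b) with ⟨hm, _⟩ | ⟨hm, _⟩ <;> rw [hm] <;> simp
    calc ∫⁻ t in Set.Ioi (0:ℝ), (h' (‖T t z‖₊ / 2) : ℝ≥0∞)
        ≤ ∫⁻ t in Set.Ioi (0:ℝ),
            ((h' ‖T t (x₀ + z)‖₊ : ℝ≥0∞) + (h' ‖T t x₀‖₊ : ℝ≥0∞)) := lintegral_mono hpt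
      _ = (∫⁻ t in Set.Ioi (0:ℝ), (h' ‖T t (x₀ + z)‖₊ : ℝ≥0∞))
            + ∫⁻ t in Set.Ioi (0:ℝ), (h' ‖T t x₀‖₊ : ℝ≥0∞) :=
          lintegral_add_left' (aemeas_aux T hTcont h' h'mono _) _
      _ ≤ (N:ℝ≥0∞) + N := add_le_add hyF hx₀F
  -- final contradiction
  set ε : ℝ≥0 := (show ℝ≥0 from ⟨r, hr.le⟩) / (8 * Cn) with hεdef
  have hεpos : 0 < ε := by
    have hc : (0:ℝ) < (ε:ℝ) := by
      rw [hεdef, NNReal.coe_div]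
      push_cast [hCnC]
      apply div_pos hr (by linarith)
    exact_mod_cast hc
  have hhε : 0 < h' ε := hLsc_pos h hmono hpos hεpos
  set t₀ : ℝ := (((2 * N + 1 : ℝ≥0) / h' ε : ℝ≥0) : ℝ) with ht₀def
  have ht₀pos : 0 < t₀ := by
    rw [ht₀def]
    have hc : (0:ℝ≥0) < (2 * N + 1 : ℝ≥0) / h' ε := by
      rw [← NNReal.coe_lt_coe, NNReal.coe_div]
      apply div_pos _ (by exact_mod_cast hhε)
      push_cast
      positivity
    exact_mod_cast hc
  obtain ⟨y, hy1, hy2⟩ := (T t₀).exists_lt_apply_of_lt_opNorm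
    (lt_of_lt_of_le (by norm_num : (1/2 : ℝ) < 1) (hT1 t₀ ht₀pos.le))
  set z : X := ((r/2 : ℝ) : ℂ) • y with hzdef
  have hznorm : ‖z‖ < r := by
    rw [hzdef, norm_smul, Complex.norm_real, Real.norm_eq_abs, abs_of_pos (by linarith)]
    nlinarith [norm_nonneg y]
  have hTz : (r/4 : ℝ) < ‖T t₀ z‖ := by
    rw [hzdef, _root_.map_smul, norm_smul, Complex.norm_real, Real.norm_eq_abs,
      abs_of_pos (by linarith : (0:ℝ) < r/2)]
    nlinarith
  have harg : ε ≤ ‖T t₀ z‖₊ / (2 * Cn) := by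
    rw [hεdef, ← NNReal.coe_le_coe, NNReal.coe_div, NNReal.coe_div]
    push_cast [hCnC]
    rw [div_le_div_iff₀ (by linarith) (by linarith)]
    change r * (2 * C) ≤ ‖T t₀ z‖ * (8 * C)
    nlinarith [mul_le_mul_of_nonneg_right hTz.le (by linarith : (0:ℝ) ≤ 8*C)]
  have hkey : ∀ s ∈ Set.Ioo (0:ℝ) t₀,
      (h' (‖T t₀ z‖₊ / (2 * Cn)) : ℝ≥0∞) ≤ (h' (‖T s z‖₊ / 2) : ℝ≥0∞) := by
    intro s hs
    have hsplit : T t₀ z = T (t₀ - s) (T s z) := by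
      have he := hTadd (t₀ - s) s (by linarith [hs.2]) hs.1.le
      rw [sub_add_cancel] at he
      rw [he]; rfl
    have hb : ‖T t₀ z‖ ≤ C * ‖T s z‖ := by
      rw [hsplit]
      exact le_trans ((T (t₀ - s)).le_opNorm _)
        (mul_le_mul_of_nonneg_right (hC _ (by linarith [hs.2])) (norm_nonneg _))
    have hdiv : ‖T t₀ z‖₊ / (2 * Cn) ≤ ‖T s z‖₊ / 2 := by
      rw [← NNReal.coe_le_coe, NNReal.coe_div, NNReal.coe_div]
      push_cast [hCnC]
      rw [div_le_div_iff₀ (by linarith) (by norm_num)]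
      nlinarith [norm_nonneg (T s z)]
    exact_mod_cast h'mono hdiv
  have hstep : (h' (‖T t₀ z‖₊ / (2 * Cn)) : ℝ≥0∞) * ENNReal.ofReal t₀ ≤ (N:ℝ≥0∞) + N := by
    calc (h' (‖T t₀ z‖₊ / (2 * Cn)) : ℝ≥0∞) * ENNReal.ofReal t₀
        = ∫⁻ _ in Set.Ioo (0:ℝ) t₀, (h' (‖T t₀ z‖₊ / (2 * Cn)) : ℝ≥0∞) := by
          rw [setLIntegral_const, Real.volume_Ioo, sub_zero]
      _ ≤ ∫⁻ s in Set.Ioo (0:ℝ) t₀, (h' (‖T s z‖₊ / 2) : ℝ≥0∞) := by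
          apply lintegral_mono_ae
          exact (ae_restrict_iff' measurableSet_Ioo).2 (ae_of_all _ hkey)
      _ ≤ ∫⁻ s in Set.Ioi (0:ℝ), (h' (‖T s z‖₊ / 2) : ℝ≥0∞) :=
          lintegral_mono_set (fun s hs => hs.1)
      _ ≤ (N:ℝ≥0∞) + N := hUnif z hznorm
  have hlow : (h' ε : ℝ≥0∞) * ENNReal.ofReal t₀ ≤ (N:ℝ≥0∞) + N :=
    le_trans (mul_le_mul_left (by exact_mod_cast h'mono harg) _) hstep
  have hval : (h' ε : ℝ≥0∞) * ENNReal.ofReal t₀ = ((2 * N + 1 : ℝ≥0) : ℝ≥0∞) := by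
    rw [ht₀def, ENNReal.ofReal_coe_nnreal, ← ENNReal.coe_mul]
    congr 1
    rw [mul_comm, div_mul_cancel₀ _ hhε.ne']
  rw [hval] at hlow
  have hfin : (2 * N + 1 : ℝ≥0) ≤ (N : ℝ≥0) + N := by exact_mod_cast hlow
  rw [← NNReal.coe_le_coe] at hfin
  push_cast at hfin
  linarith
end

section
/- Let T be a C₀-semigroup on a Banach space X that is not uniformly bounded, i.e. sup_{t≥0} ‖T_t‖ = ∞. Then there exists x ∈ X such that the set {t ≥ 0 : ‖T_t x‖ > 1} has infinite Lebesgue measure. -/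
open Filter MeasureTheory
open scoped NNReal ENNReal

/-- an unbounded C₀-semigroup has an orbit staying above `1` in norm on a
set of infinite Lebesgue measure. -/
theorem stmt_3 {X : Type*} [NormedAddCommGroup X] [NormedSpace ℂ X] [CompleteSpace X]
    (T : ℝ → X →L[ℂ] X)
    (hT0 : T 0 = 1)
    (hTadd : ∀ s t : ℝ, 0 ≤ s → 0 ≤ t → T (s + t) = (T s).comp (T t))
    (hTcont : ∀ x : X, ContinuousOn (fun t => T t x) (Set.Ici 0))
    (hunb : ∀ M : ℝ, ∃ t : ℝ, 0 ≤ t ∧ M < ‖T t‖) :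
    ∃ x : X, volume {t : ℝ | 0 ≤ t ∧ 1 < ‖T t x‖} = ∞ := by
  -- A vector with unbounded orbit, from Banach–Steinhaus.
  have hx : ∃ x : X, ∀ N : ℝ, ∃ t : ℝ, 0 ≤ t ∧ N < ‖T t x‖ := by
    by_contra h
    push_neg at h
    obtain ⟨C, hC⟩ := banach_steinhaus (g := fun t : {t : ℝ // 0 ≤ t} => T t)
      (fun x => by
        obtain ⟨N, hN⟩ := h x
        exact ⟨N, fun i => hN i i.2⟩)
    obtain ⟨t, ht, hlt⟩ := hunb C
    exact absurd (hC ⟨t, ht⟩) (not_le.2 hlt)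
  obtain ⟨x, hx⟩ := hx
  refine ⟨x, ?_⟩
  set S : Set ℝ := {t : ℝ | 0 ≤ t ∧ 1 < ‖T t x‖} with hS
  -- uniform bound on [0,1] for the operator norms, via Banach–Steinhaus
  have hC1 : ∃ C : ℝ, 0 < C ∧ ∀ s ∈ Set.Icc (0:ℝ) 1, ‖T s‖ ≤ C := by
    obtain ⟨C, hC⟩ := banach_steinhaus (g := fun s : (Set.Icc (0:ℝ) 1) => T s)
      (fun y => by
        obtain ⟨C, hC⟩ := (isCompact_Icc (a := (0:ℝ)) (b := 1)).exists_bound_of_continuousOn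
          ((hTcont y).mono (fun t ht => ht.1))
        exact ⟨C, fun i => hC i i.2⟩)
    refine ⟨max C 1, lt_of_lt_of_le one_pos (le_max_right _ _), fun s hs =>
      le_trans (hC ⟨s, hs⟩) (le_max_left _ _)⟩
  obtain ⟨C, hCpos, hC⟩ := hC1
  -- main claim: beyond any time N there is a unit interval inside S
  have claim : ∀ N : ℝ, ∃ u : ℝ, N ≤ u ∧ Set.Icc u (u + 1) ⊆ S := by
    intro N
    set N' : ℝ := max N 0 with hN'
    have hN'0 : 0 ≤ N' := le_max_right _ _
    obtain ⟨K, hK⟩ := (isCompact_Icc (a := (0:ℝ)) (b := N' + 2)).exists_bound_of_continuousOn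
      ((hTcont x).mono (fun t ht => ht.1))
    obtain ⟨t, ht0, htB⟩ := hx (max K C)
    have htK : max K C < ‖T t x‖ := htB
    have ht2 : N' + 2 < t := by
      by_contra hcon
      push_neg at hcon
      have := hK t ⟨ht0, hcon⟩
      have := lt_of_le_of_lt (le_max_left K C) htK
      linarith
    have hNN' : N ≤ N' := le_max_left N 0
    refine ⟨t - 1, by linarith, fun s hs => ?_⟩
    have hs0 : 0 ≤ s := by
      have := hs.1; linarith
    have hts : 0 ≤ t - s := by
      have := hs.2; linarith
    have hts1 : t - s ≤ 1 := by
      have := hs.1; linarith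
    have hdecomp : T t x = T (t - s) (T s x) := by
      have : T ((t - s) + s) = (T (t - s)).comp (T s) := hTadd _ _ hts hs0
      rw [sub_add_cancel] at this
      rw [this]; rfl
    have hbound : ‖T t x‖ ≤ C * ‖T s x‖ := by
      rw [hdecomp]
      calc ‖T (t - s) (T s x)‖ ≤ ‖T (t - s)‖ * ‖T s x‖ := (T (t - s)).le_opNorm _
        _ ≤ C * ‖T s x‖ := by
            exact mul_le_mul_of_nonneg_right (hC _ ⟨hts, hts1⟩) (norm_nonneg _)
    have hCt : C < ‖T t x‖ := lt_of_le_of_lt (le_max_right K C) htK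
    refine ⟨hs0, ?_⟩
    by_contra hcon
    push_neg at hcon
    have : ‖T t x‖ ≤ C * 1 := le_trans hbound (mul_le_mul_of_nonneg_left hcon hCpos.le)
    rw [mul_one] at this
    linarith
  choose f hf hfS using claim
  -- a sequence of pairwise-disjoint unit intervals inside S
  set g : ℕ → ℝ := fun n => Nat.rec (f 0) (fun _ prev => f (prev + 2)) n with hg
  have hgstep : ∀ n : ℕ, g n + 2 ≤ g (n + 1) := fun n => hf (g n + 2)
  have hgmono : StrictMono g := strictMono_nat_of_lt_succ (fun n => by
    have := hgstep n; linarith)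
  have hgsub : ∀ n : ℕ, Set.Icc (g n) (g n + 1) ⊆ S := by
    intro n
    cases n with
    | zero => exact hfS 0
    | succ m => exact hfS (g m + 2)
  have hsep : ∀ m n : ℕ, m < n → g m + 1 < g n := by
    intro m n hmn
    have h1 : g m + 2 ≤ g (m + 1) := hgstep m
    have h2 : g (m + 1) ≤ g n := hgmono.monotone hmn
    linarith
  have hdisj : Pairwise (Function.onFun Disjoint (fun n : ℕ => Set.Icc (g n) (g n + 1))) := by
    intro m n hmn
    rcases lt_or_gt_of_ne hmn with h | h
    · exact Set.disjoint_left.2 (fun a ha hb => by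
        have := hsep m n h
        have := ha.2; have := hb.1; linarith)
    · exact Set.disjoint_left.2 (fun a ha hb => by
        have := hsep n m h
        have := ha.1; have := hb.2; linarith)
  have hle : volume (⋃ n : ℕ, Set.Icc (g n) (g n + 1)) ≤ volume S :=
    measure_mono (Set.iUnion_subset hgsub)
  have hvol : volume (⋃ n : ℕ, Set.Icc (g n) (g n + 1)) = ∞ := by
    rw [measure_iUnion hdisj (fun n => measurableSet_Icc)]
    have : ∀ n : ℕ, volume (Set.Icc (g n) (g n + 1)) = 1 := by
      intro n
      rw [Real.volume_Icc]
      norm_num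
    simp only [this]
    exact ENNReal.tsum_const_eq_top_of_ne_zero one_ne_zero
  rw [hvol] at hle
  exact top_le_iff.1 hle
end

section
/- Let T be a C₀-semigroup with generator A on a Banach space X, and suppose s₀(A) = 0 (the abscissa of uniform boundedness of the resolvent is 0). Then for every δ > 0 and every t₀ < ∞ there exist β ∈ ℝ and y ∈ D(A) with ‖y‖ = 1 such that ‖T_t y − e^{iβt} y‖ < δ for all t ∈ [0, t₀]. -/
open Filter

/-- The resolvent `(λ − A)⁻¹` of the operator `A` (with domain `D`) exists and is
uniformly bounded on the half-plane `Re λ > ω`.  The abscissa `s₀(A)` of uniform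
boundedness of the resolvent is the infimum of the set of such `ω`. -/
def ResolventUnifBdd {X : Type*} [NormedAddCommGroup X] [NormedSpace ℂ X]
    (D : Set X) (A : X → X) (ω : ℝ) : Prop :=
  ∃ M : ℝ, ∀ lam : ℂ, ω < lam.re → ∃ R : X →L[ℂ] X, ‖R‖ ≤ M ∧
    (∀ x : X, R x ∈ D ∧ lam • R x - A (R x) = x) ∧
    (∀ x ∈ D, R (lam • x - A x) = x)

set_option maxHeartbeats 1000000 in
/-- Approximate eigenvectors from `s₀(A) = 0`. -/
lemma approx_eig {X : Type*} [NormedAddCommGroup X] [NormedSpace ℂ X] [CompleteSpace X]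
    (D : Set X) (A : X → X)
    (hs0_lower : ∀ ω : ℝ, ω < 0 → ¬ ResolventUnifBdd D A ω)
    (hs0_upper : ∀ ω : ℝ, 0 < ω → ResolventUnifBdd D A ω) :
    ∀ ε : ℝ, 0 < ε → ∃ β : ℝ, ∃ y ∈ D, ‖y‖ = 1 ∧
      ‖A y - (Complex.I * β) • y‖ ≤ ε := by
  intro ε hε
  -- Step 1: find `lam` with small real part and resolvent of big norm
  have claimR : ∃ (lam : ℂ) (R : X →L[ℂ] X), 0 < lam.re ∧ lam.re ≤ ε / 2 ∧
      (∀ x : X, R x ∈ D ∧ lam • R x - A (R x) = x) ∧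
      (∀ x ∈ D, R (lam • x - A x) = x) ∧ 2 / ε < ‖R‖ := by
    by_contra hc
    push_neg at hc
    obtain ⟨M, hM⟩ := hs0_upper (ε / 2) (by positivity)
    obtain ⟨M₀, hM₀⟩ : ∃ m : ℝ, m = max M (2 / ε) + 1 := ⟨_, rfl⟩
    have h2ε : (0:ℝ) < 2 / ε := by positivity
    have hM₀pos : 0 < M₀ := by
      have := le_max_right M (2 / ε); linarith
    have hall : ∀ lam : ℂ, 0 < lam.re → ∃ R : X →L[ℂ] X, ‖R‖ ≤ M₀ ∧
        (∀ x : X, R x ∈ D ∧ lam • R x - A (R x) = x) ∧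
        (∀ x ∈ D, R (lam • x - A x) = x) := by
      intro lam hlam
      rcases le_or_gt lam.re (ε / 2) with hle | hgt
      · obtain ⟨M', hM'⟩ := hs0_upper (lam.re / 2) (by positivity)
        obtain ⟨R, _, h1, h2⟩ := hM' lam (by linarith)
        refine ⟨R, ?_, h1, h2⟩
        have := hc lam R hlam hle h1 h2
        have := le_max_right M (2 / ε)
        linarith
      · obtain ⟨R, hRn, h1, h2⟩ := hM lam hgt
        refine ⟨R, ?_, h1, h2⟩
        have := le_max_left M (2 / ε)
        linarith
    -- Neumann series extension to `Re lam > -(4 M₀)⁻¹`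
    have h4M : (0:ℝ) < 4 * M₀ := by positivity
    have h4Minv : (0:ℝ) < (4 * M₀)⁻¹ := by positivity
    refine hs0_lower (-(4 * M₀)⁻¹) (neg_neg_of_pos h4Minv) ⟨4 * M₀, ?_⟩
    intro lam hlam
    rcases lt_or_ge 0 lam.re with hpos | hnonpos
    · obtain ⟨R, hRn, h1, h2⟩ := hall lam hpos
      exact ⟨R, by nlinarith, h1, h2⟩
    · -- shift the real part to `(4 M₀)⁻¹`
      set μ : ℂ := lam + (((4 * M₀)⁻¹ - lam.re : ℝ) : ℂ) with hμ
      have hμre : μ.re = (4 * M₀)⁻¹ := by simp [hμ]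
      obtain ⟨R, hRn, h1, h2⟩ := hall μ (by rw [hμre]; positivity)
      have hdiff : ‖μ - lam‖ < (2 * M₀)⁻¹ := by
        have h5 : μ - lam = (((4 * M₀)⁻¹ - lam.re : ℝ) : ℂ) := by ring
        rw [h5, Complex.norm_real, Real.norm_eq_abs,
          abs_of_pos (by linarith : (0:ℝ) < (4 * M₀)⁻¹ - lam.re)]
        have h4 : (4 * M₀)⁻¹ + (4 * M₀)⁻¹ ≤ (2 * M₀)⁻¹ := by
          rw [show (4 : ℝ) * M₀ = 2 * (2 * M₀) by ring, mul_inv]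
          nlinarith [inv_pos.mpr (show (0:ℝ) < 2 * M₀ by positivity)]
        have hl : -(4 * M₀)⁻¹ < lam.re := hlam
        linarith
      set a : X →L[ℂ] X := (μ - lam) • R with ha
      have hanorm : ‖a‖ ≤ 1 / 2 := by
        have h6 : ‖a‖ ≤ ‖μ - lam‖ * ‖R‖ := by rw [ha]; exact norm_smul_le (μ - lam) R
        have h7 : ‖μ - lam‖ * ‖R‖ ≤ (2 * M₀)⁻¹ * M₀ :=
          mul_le_mul hdiff.le hRn (norm_nonneg _) (by positivity)
        have h8 : (2 * M₀)⁻¹ * M₀ = 1 / 2 := by field_simp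
        linarith
      have ha1 : ‖a‖ < 1 := lt_of_le_of_lt hanorm (by norm_num)
      set b : X →L[ℂ] X := ∑' n : ℕ, a ^ n with hb
      have hbmul : b * (1 - a) = 1 := geom_series_mul_neg a ha1
      have hmulb : (1 - a) * b = 1 := mul_neg_geom_series a ha1
      have hbnorm : ‖b‖ ≤ 2 := by
        have h9 : ‖b‖ ≤ ‖(1 : X →L[ℂ] X)‖ - 1 + (1 - ‖a‖)⁻¹ :=
          tsum_geometric_le_of_norm_lt_one a ha1
        have hid : ‖(1 : X →L[ℂ] X)‖ ≤ 1 := ContinuousLinearMap.norm_id_le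
        have h12 : (1 - ‖a‖)⁻¹ ≤ 2 := by
          rw [show (2:ℝ) = (1/2)⁻¹ by norm_num]
          exact inv_anti₀ (by norm_num) (by linarith)
        linarith
      -- commutation of b with R
      have hcomm : b * R = R * b := by
        have haR : a * R = R * a := by
          rw [ha, smul_mul_assoc, mul_smul_comm]
        have h1a : R * (1 - a) = (1 - a) * R := by
          rw [sub_mul, mul_sub, one_mul, mul_one, haR]
        calc b * R = b * R * 1 := (mul_one _).symm
          _ = b * R * ((1 - a) * b) := by rw [hmulb]
          _ = b * (R * (1 - a)) * b := by simp only [mul_assoc]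
          _ = b * ((1 - a) * R) * b := by rw [h1a]
          _ = b * (1 - a) * (R * b) := by simp only [mul_assoc]
          _ = 1 * (R * b) := by rw [hbmul]
          _ = R * b := one_mul _
      refine ⟨R * b, ?_, ?_, ?_⟩
      · calc ‖R * b‖ ≤ ‖R‖ * ‖b‖ := norm_mul_le _ _
          _ ≤ M₀ * 2 := mul_le_mul hRn hbnorm (norm_nonneg _) (by linarith)
          _ ≤ 4 * M₀ := by linarith
      · intro x
        have hmem := (h1 (b x)).1
        have heq := (h1 (b x)).2
        refine ⟨by simpa [ContinuousLinearMap.mul_apply] using hmem, ?_⟩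
        have e1 : lam • ((R * b) x) - A ((R * b) x)
            = (μ • R (b x) - A (R (b x))) - (μ - lam) • R (b x) := by
          rw [ContinuousLinearMap.mul_apply, sub_smul]; abel
        rw [e1, heq]
        have e2 : (μ - lam) • R (b x) = a (b x) := by rw [ha]; rfl
        rw [e2]
        have e3 : b x - a (b x) = ((1 - a) * b) x := by
          rw [ContinuousLinearMap.mul_apply, ContinuousLinearMap.sub_apply,
            ContinuousLinearMap.one_apply]
        rw [e3, hmulb, ContinuousLinearMap.one_apply]
      · intro x hx
        have e4 : lam • x - A x = (μ • x - A x) - (μ - lam) • x := by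
          rw [sub_smul]; abel
        have e5 : (R * b) (lam • x - A x) = b (R (lam • x - A x)) := by
          rw [← hcomm]; rfl
        rw [e5, e4, map_sub, map_sub, h2 x hx]
        have e6 : R ((μ - lam) • x) = a x := by rw [ha]; rw [ContinuousLinearMap.smul_apply, map_smul]
        rw [e6]
        have e7 : b x - b (a x) = (b * (1 - a)) x := by
          rw [ContinuousLinearMap.mul_apply, ContinuousLinearMap.sub_apply,
            ContinuousLinearMap.one_apply, map_sub]
        rw [e7, hbmul, ContinuousLinearMap.one_apply]
  obtain ⟨lam, R, hre, hreε, h1, h2, hRn⟩ := claimR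
  -- find a vector where `R` nearly attains norm > 2/ε
  have hx : ∃ x : X, 2 / ε * ‖x‖ < ‖R x‖ := by
    by_contra hno
    push_neg at hno
    exact absurd (ContinuousLinearMap.opNorm_le_bound R (by positivity) hno)
      (not_le.mpr hRn)
  obtain ⟨x, hxlt⟩ := hx
  have hxne : x ≠ 0 := by
    rintro rfl
    simp at hxlt
  have hxpos : 0 < ‖x‖ := norm_pos_iff.mpr hxne
  have hRxpos : 0 < ‖R x‖ := lt_trans (by positivity) hxlt
  set c : ℂ := ((‖R x‖⁻¹ : ℝ) : ℂ) with hcdef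
  set y : X := R (c • x) with hy
  have hyx : y = c • R x := by rw [hy, map_smul]
  have hynorm : ‖y‖ = 1 := by
    rw [hyx, norm_smul, hcdef]
    simp [Real.norm_eq_abs, abs_of_pos (inv_pos.mpr hRxpos)]
    field_simp
  refine ⟨lam.im, y, (h1 (c • x)).1, hynorm, ?_⟩
  have heq := (h1 (c • x)).2
  -- A y = lam • y - c • x
  have hAy : A y = lam • y - c • x := by
    rw [← hy] at heq
    rw [← heq]; abel
  have hsplit : A y - (Complex.I * (lam.im : ℂ)) • y = ((lam.re : ℝ) : ℂ) • y - c • x := by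
    rw [hAy, sub_right_comm]
    congr 1
    rw [← sub_smul]
    congr 1
    apply Complex.ext <;> simp
  rw [hsplit]
  have hb1 : ‖((lam.re : ℝ) : ℂ) • y‖ = lam.re := by
    rw [norm_smul, hynorm, Complex.norm_real, Real.norm_eq_abs, abs_of_pos hre, mul_one]
  have hb2 : ‖c • x‖ ≤ ε / 2 := by
    rw [hcdef, norm_smul, Complex.norm_real, Real.norm_eq_abs,
      abs_of_pos (inv_pos.mpr hRxpos)]
    rw [inv_mul_le_iff₀ hRxpos]
    have hmul := mul_lt_mul_of_pos_right hxlt (by positivity : (0:ℝ) < ε / 2)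
    have hid : 2 / ε * ‖x‖ * (ε / 2) = ‖x‖ := by field_simp
    linarith
  calc ‖((lam.re : ℝ) : ℂ) • y - c • x‖ ≤ ‖((lam.re : ℝ) : ℂ) • y‖ + ‖c • x‖ := norm_sub_le _ _
    _ ≤ ε / 2 + ε / 2 := add_le_add (by rw [hb1]; exact hreε) hb2
    _ = ε := by ring



set_option maxHeartbeats 1000000 in
/-- Lemma 1: if `s₀(A) = 0` then for every `δ > 0` and `t₀ < ∞` there are
`β ∈ ℝ` and a unit vector `y ∈ D(A)` with `‖T_t y − e^{iβt} y‖ < δ` on `[0, t₀]`. -/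
theorem stmt_5 {X : Type*} [NormedAddCommGroup X] [NormedSpace ℂ X] [CompleteSpace X]
    (T : ℝ → X →L[ℂ] X)
    (hT0 : T 0 = 1)
    (hTadd : ∀ s t : ℝ, 0 ≤ s → 0 ≤ t → T (s + t) = (T s).comp (T t))
    (hTcont : ∀ x : X, ContinuousOn (fun t => T t x) (Set.Ici 0))
    (D : Set X) (A : X → X)
    (hgen : ∀ x ∈ D, Tendsto (fun h : ℝ => h⁻¹ • (T h x - x))
      (nhdsWithin 0 (Set.Ioi 0)) (nhds (A x)))
    (hmax : ∀ x : X, (∃ l : X, Tendsto (fun h : ℝ => h⁻¹ • (T h x - x))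
      (nhdsWithin 0 (Set.Ioi 0)) (nhds l)) → x ∈ D)
    (hs0_lower : ∀ ω : ℝ, ω < 0 → ¬ ResolventUnifBdd D A ω)
    (hs0_upper : ∀ ω : ℝ, 0 < ω → ResolventUnifBdd D A ω) :
    ∀ δ : ℝ, 0 < δ → ∀ t₀ : ℝ, ∃ β : ℝ, ∃ y ∈ D, ‖y‖ = 1 ∧
      ∀ t ∈ Set.Icc (0:ℝ) t₀, ‖T t y - Complex.exp (Complex.I * (β * t)) • y‖ < δ := by
  intro δ hδ t₀
  obtain ⟨t₁, ht₁def⟩ : ∃ t : ℝ, t = max t₀ 1 := ⟨_, rfl⟩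
  have ht₁1 : 1 ≤ t₁ := ht₁def ▸ le_max_right _ _
  have ht₁0 : t₀ ≤ t₁ := ht₁def ▸ le_max_left _ _
  have ht₁pos : 0 < t₁ := lt_of_lt_of_le one_pos ht₁1
  -- uniform bound on the semigroup on `[0, t₁]`
  obtain ⟨C, hC1, hC⟩ : ∃ C : ℝ, 1 ≤ C ∧ ∀ t ∈ Set.Icc (0:ℝ) t₁, ‖T t‖ ≤ C := by
    have key : ∃ C' : ℝ, ∀ i : (Set.Icc (0:ℝ) t₁), ‖T i‖ ≤ C' := by
      apply banach_steinhaus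
      intro x
      obtain ⟨B, hB⟩ := isCompact_Icc.exists_bound_of_continuousOn
        ((hTcont x).mono (Set.Icc_subset_Ici_self))
      exact ⟨B, fun i => hB i i.2⟩
    obtain ⟨C', hC'⟩ := key
    exact ⟨max C' 1, le_max_right _ _,
      fun t ht => le_trans (hC' ⟨t, ht⟩) (le_max_left _ _)⟩
  have hCpos : 0 < C := lt_of_lt_of_le one_pos hC1
  obtain ⟨ε, hεdef⟩ : ∃ e : ℝ, e = δ / (2 * C * t₁) := ⟨_, rfl⟩
  have hεpos : 0 < ε := by rw [hεdef]; positivity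
  obtain ⟨β, y, hyD, hynorm, hAy⟩ := approx_eig D A hs0_lower hs0_upper ε hεpos
  refine ⟨β, y, hyD, hynorm, ?_⟩
  -- the function `f s = exp(-(iβ) s) • T s y`
  set g : ℝ → ℂ := fun s => Complex.exp ((-(Complex.I * β)) * s) with hg
  set f : ℝ → X := fun s => g s • T s y with hf
  -- right derivative of `s ↦ T s y`
  have hu : ∀ t : ℝ, 0 ≤ t →
      HasDerivWithinAt (fun s => T s y) (T t (A y)) (Set.Ici t) t := by
    intro t ht
    rw [hasDerivWithinAt_iff_tendsto_slope, Set.Ici_sdiff_left]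
    have h1 := hgen y hyD
    have h2 := ((T t).continuous.tendsto (A y)).comp h1
    have h3 : Tendsto (fun h : ℝ => h⁻¹ • (T (t + h) y - T t y))
        (nhdsWithin 0 (Set.Ioi 0)) (nhds (T t (A y))) := by
      apply h2.congr'
      filter_upwards [self_mem_nhdsWithin] with h hh
      have h7 := hTadd t h ht (le_of_lt hh)
      simp only [Function.comp_apply]
      rw [h7, ContinuousLinearMap.comp_apply, ← map_sub, ← ContinuousLinearMap.map_smul_of_tower]
    have h5 : Tendsto (fun s => s - t) (nhdsWithin t (Set.Ioi t))
        (nhdsWithin 0 (Set.Ioi 0)) := by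
      apply tendsto_nhdsWithin_of_tendsto_nhds_of_eventually_within
      · have h8 : Tendsto (fun s : ℝ => s - t) (nhds t) (nhds 0) := by
          simpa using ((tendsto_id (α := ℝ)).sub_const t : Tendsto (fun s : ℝ => s - t) (nhds t) (nhds (t - t)))
        exact h8.mono_left nhdsWithin_le_nhds
      · exact eventually_nhdsWithin_of_forall (fun s hs => by simpa [sub_pos] using hs)
    have h6 := h3.comp h5
    apply h6.congr
    intro s
    simp only [Function.comp_apply, slope_def_module]
    rw [add_sub_cancel]
  -- derivative of the scalar factor
  have hgderiv : ∀ t : ℝ, HasDerivAt g (g t * (-(Complex.I * β))) t := by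
    intro t
    have hcoe : HasDerivAt (fun s : ℝ => (s : ℂ)) 1 t := by
      exact Complex.ofRealCLM.hasDerivAt (x := t)
    have hlin := hcoe.const_mul (-(Complex.I * (β:ℂ)))
    rw [mul_one] at hlin
    exact hlin.cexp
  -- derivative of f with the right bound
  have hfd : ∀ t ∈ Set.Ico (0:ℝ) t₁, HasDerivWithinAt f
      (g t • T t (A y - (Complex.I * β) • y)) (Set.Ici t) t := by
    intro t ht
    have := ((hgderiv t).hasDerivWithinAt (s := Set.Ici t)).smul (hu t ht.1)
    have heq : g t • (T t (A y)) + (g t * (-(Complex.I * β))) • T t y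
        = g t • T t (A y - (Complex.I * β) • y) := by
      rw [map_sub, map_smul, smul_sub, mul_neg, neg_smul, ← smul_smul]
      abel
    rw [heq] at this
    exact this
  have hbound : ∀ t ∈ Set.Ico (0:ℝ) t₁,
      ‖g t • T t (A y - (Complex.I * β) • y)‖ ≤ C * ε := by
    intro t ht
    have hg1 : ‖g t‖ = 1 := by
      rw [hg]
      simp only [Complex.norm_exp]
      norm_num
    rw [norm_smul, hg1, one_mul]
    calc ‖T t (A y - (Complex.I * β) • y)‖ ≤ ‖T t‖ * ‖A y - (Complex.I * β) • y‖ :=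
          (T t).le_opNorm _
      _ ≤ C * ε := mul_le_mul (hC t ⟨ht.1, le_of_lt ht.2⟩) hAy (norm_nonneg _) (le_of_lt hCpos)
  have hfcont : ContinuousOn f (Set.Icc 0 t₁) := by
    apply ContinuousOn.smul
    · exact (Complex.continuous_exp.comp (by continuity)).continuousOn
    · exact (hTcont y).mono (Set.Icc_subset_Ici_self)
  have hmvt := norm_image_sub_le_of_norm_deriv_right_le_segment hfcont hfd hbound
  have hf0 : f 0 = y := by
    rw [hf]
    simp only [hg]
    rw [hT0]
    norm_num
  intro t ht
  have htt₁ : t ∈ Set.Icc (0:ℝ) t₁ := ⟨ht.1, le_trans ht.2 ht₁0⟩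
  have hkey := hmvt t htt₁
  rw [hf0, sub_zero] at hkey
  -- transfer back
  have hflip : ‖T t y - Complex.exp (Complex.I * (β * t)) • y‖ = ‖f t - y‖ := by
    have hprod : Complex.exp (Complex.I * (β * t)) * g t = 1 := by
      rw [hg, ← Complex.exp_add,
        show Complex.I * (↑β * ↑t) + -(Complex.I * ↑β) * ↑t = 0 from by ring,
        Complex.exp_zero]
    have : Complex.exp (Complex.I * (β * t)) • (f t - y)
        = T t y - Complex.exp (Complex.I * (β * t)) • y := by
      rw [hf]
      simp only [smul_sub, smul_smul, hprod, one_smul]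
    rw [← this, norm_smul]
    simp [Complex.norm_exp]
  rw [hflip]
  calc ‖f t - y‖ ≤ C * ε * t := hkey
    _ ≤ C * ε * t₁ := by
        exact mul_le_mul_of_nonneg_left htt₁.2 (by positivity)
    _ = δ / 2 := by rw [hεdef]; field_simp
    _ < δ := by linarith
end
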